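/- Let F = conv{(0,0),(t,0),(0,1)} ⊂ ℝ² be a t-triangle with edges S₁ (length t), S₂, S₃, and let r ∈ ℝ₊. Let ℓ_{rS_j} be the support functions of the dilated polygon rF, set all boundary conditions ε_S = 0, and let c_{rF} be the constant value of Σ_j c_{S_j} ℓ_{rS_j}. Then max{0, c_{rF} + 1} = |rF ∩ ℤ²| if r < 1, and max{0, c_{rF}+1} = |rF ∩ ℤ²| - |(r-1)F ∩ ℤ²| if r ≥ 1. -/

import Mathlib

open Pointwise
/-- The inclusion `ℤ² → ℝ²`. -/
def castPt (p : Fin 2 → ℤ) : Fin 2 → ℝ := fun i => (p i : ℝ)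

/-- The integral affine function on `ℝ²` with linear coefficients `c : Fin 2 → ℤ` and
constant term `d : ℤ`. -/
def affZ (c : Fin 2 → ℤ) (d : ℤ) (x : Fin 2 → ℝ) : ℝ :=
  (c 0 : ℝ) * x 0 + (c 1 : ℝ) * x 1 + (d : ℝ)

lemma triangle_hull (t : ℕ) (ht : 1 ≤ t) :
    convexHull ℝ {![(0:ℝ),0], ![(t:ℝ),0], ![0,1]} =
      {x : Fin 2 → ℝ | 0 ≤ x 0 ∧ 0 ≤ x 1 ∧ x 0 + t * x 1 ≤ t} := by
  have ht' : (0:ℝ) < t := by exact_mod_cast ht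
  apply le_antisymm
  · apply convexHull_min
    · rintro x (rfl | rfl | rfl) <;>
        refine ⟨by simp, by simp, by simp⟩
    · rintro x ⟨hx0, hx1, hx2⟩ y ⟨hy0, hy1, hy2⟩ p q hp hq hpq
      simp only [Set.mem_setOf_eq, Pi.add_apply, Pi.smul_apply, smul_eq_mul]
      refine ⟨by nlinarith, by nlinarith, by nlinarith⟩
  · rintro z ⟨hz0, hz1, hz2⟩
    set C := convexHull ℝ ({![(0:ℝ),0], ![(t:ℝ),0], ![0,1]} : Set (Fin 2 → ℝ)) with hC
    have hCc : Convex ℝ C := convex_convexHull ℝ _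
    have hv0 : ![(0:ℝ),0] ∈ C := subset_convexHull ℝ _ (by simp)
    have hv1 : ![(t:ℝ),0] ∈ C := subset_convexHull ℝ _ (by simp)
    have hv2 : ![(0:ℝ),1] ∈ C := subset_convexHull ℝ _ (by simp)
    rcases eq_or_lt_of_le (show z 1 ≤ 1 by nlinarith) with h1 | h1
    · have hz00 : z 0 = 0 := by nlinarith
      have : z = ![(0:ℝ),1] := by
        funext i; fin_cases i <;> simp [hz00, ← h1]
      rw [this]; exact hv2
    · have h1' : (0:ℝ) < 1 - z 1 := by linarith
      set θ : ℝ := z 0 / ((1 - z 1) * t) with hθ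
      have hθ0 : 0 ≤ θ := by positivity
      have hθ1 : θ ≤ 1 := by
        rw [hθ, div_le_one (by positivity)]; nlinarith
      have hq : (1 - θ) • ![(0:ℝ),0] + θ • ![(t:ℝ),0] ∈ C :=
        hCc hv0 hv1 (by linarith) hθ0 (by ring)
      have hzmem : (1 - z 1) • ((1 - θ) • ![(0:ℝ),0] + θ • ![(t:ℝ),0]) + z 1 • ![(0:ℝ),1] ∈ C :=
        hCc hq hv2 (by linarith) hz1 (by ring)
      have hzeq : z = (1 - z 1) • ((1 - θ) • ![(0:ℝ),0] + θ • ![(t:ℝ),0]) + z 1 • ![(0:ℝ),1] := by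
        funext i; fin_cases i
        · show z 0 = _
          simp only [Pi.add_apply, Pi.smul_apply, smul_eq_mul, Fin.zero_eta, Matrix.cons_val_zero]
          rw [hθ]; field_simp; ring
        · show z 1 = _
          simp only [Pi.add_apply, Pi.smul_apply, smul_eq_mul]
          norm_num
      rw [hzeq]; exact hzmem

lemma smul_mem_char (t : ℕ) (ht : 1 ≤ t) (s : ℝ) (hs : 0 ≤ s) (x : Fin 2 → ℝ) :
    x ∈ s • convexHull ℝ {![(0:ℝ),0], ![(t:ℝ),0], ![0,1]} ↔
      (0 ≤ x 0 ∧ 0 ≤ x 1 ∧ x 0 + t * x 1 ≤ s * t) := by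
  have ht' : (0:ℝ) < t := by exact_mod_cast ht
  rcases eq_or_lt_of_le hs with rfl | hs'
  · rw [Set.zero_smul_set ⟨![(0:ℝ),0], subset_convexHull ℝ _ (by simp)⟩]
    constructor
    · intro hx
      have hx0 : x = 0 := by simpa using hx
      subst hx0; simp
    · rintro ⟨h0, h1, h2⟩
      have e0 : x 0 = 0 := by nlinarith
      have e1 : x 1 = 0 := by nlinarith
      have : x = 0 := by
        funext i; fin_cases i <;> simpa
      simp [this]
  · rw [Set.mem_smul_set_iff_inv_smul_mem₀ (ne_of_gt hs'), triangle_hull t ht]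
    simp only [Set.mem_setOf_eq, Pi.smul_apply, smul_eq_mul]
    have hinv : 0 < s⁻¹ := inv_pos.mpr hs'
    have hss : s * s⁻¹ = 1 := mul_inv_cancel₀ (ne_of_gt hs')
    constructor
    · rintro ⟨h0, h1, h2⟩
      refine ⟨by nlinarith, by nlinarith, by nlinarith⟩
    · rintro ⟨h0, h1, h2⟩
      refine ⟨by positivity, by positivity, by nlinarith⟩

def Aset (t : ℕ) (k : ℤ) : Set (Fin 2 → ℤ) :=
  {p | 0 ≤ p 0 ∧ 0 ≤ p 1 ∧ p 0 + t * p 1 ≤ k}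

lemma Aset_empty (t : ℕ) (k : ℤ) (hk : k < 0) : Aset t k = ∅ := by
  ext p
  simp only [Aset, Set.mem_setOf_eq, Set.mem_empty_iff_false, iff_false, not_and]
  intro h0 h1
  have : 0 ≤ (t:ℤ) * p 1 := mul_nonneg (by positivity) h1
  omega

lemma Aset_finite (t : ℕ) (ht : 1 ≤ t) (k : ℤ) : (Aset t k).Finite := by
  rcases lt_or_ge k 0 with hk | hk
  · rw [Aset_empty t k hk]; exact Set.finite_empty
  · apply Set.Finite.subset (Set.Finite.pi (fun i : Fin 2 => Set.finite_Icc (0:ℤ) k))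
    rintro p ⟨h0, h1, h2⟩
    have htp : p 1 ≤ (t:ℤ) * p 1 := le_mul_of_one_le_left h1 (by exact_mod_cast ht)
    have htp0 : 0 ≤ (t:ℤ) * p 1 := le_trans h1 htp
    intro i _
    fin_cases i
    · show p 0 ∈ Set.Icc 0 k
      rw [Set.mem_Icc]; omega
    · show p 1 ∈ Set.Icc 0 k
      rw [Set.mem_Icc]; omega

lemma Aset_card (t : ℕ) (ht : 1 ≤ t) (k : ℤ) (hk : 0 ≤ k) :
    (Aset t k).ncard = (Aset t (k - t)).ncard + (k + 1).toNat := by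
  classical
  have hfin := Aset_finite t ht k
  set B : Set (Fin 2 → ℤ) := {p ∈ Aset t k | p 1 = 0} with hB
  set C : Set (Fin 2 → ℤ) := {p ∈ Aset t k | p 1 ≠ 0} with hC
  have hsplit : Aset t k = B ∪ C := by
    ext p; by_cases h : p 1 = 0 <;> simp [hB, hC, h]
  have hBfin : B.Finite := hfin.subset (fun p hp => hp.1)
  have hCfin : C.Finite := hfin.subset (fun p hp => hp.1)
  have hdisj : Disjoint B C := by
    rw [Set.disjoint_iff_inter_eq_empty]
    ext p; simp only [Set.mem_inter_iff, Set.mem_empty_iff_false, iff_false]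
    rintro ⟨⟨_, h0⟩, ⟨_, h1⟩⟩; exact h1 h0
  have hBcard : B.ncard = (k + 1).toNat := by
    have himg : B = (fun x : ℤ => ![x, 0]) '' Set.Icc 0 k := by
      ext p
      constructor
      · rintro ⟨⟨h0, h1, h2⟩, hp1⟩
        refine ⟨p 0, ⟨h0, by rw [hp1] at h2; omega⟩, ?_⟩
        funext i; fin_cases i
        · rfl
        · show (0:ℤ) = p 1; omega
      · rintro ⟨x, ⟨hx0, hxk⟩, rfl⟩
        refine ⟨⟨by simpa using hx0, by simp, by simpa using hxk⟩, by simp⟩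
    rw [himg, Set.ncard_image_of_injective _ (fun x y hxy => by
      have := congrFun hxy 0; simpa using this)]
    rw [← Finset.coe_Icc, Set.ncard_coe_finset, Int.card_Icc]
    omega
  have hCcard : C.ncard = (Aset t (k - t)).ncard := by
    have himg : C = (fun p : Fin 2 → ℤ => ![p 0, p 1 + 1]) '' Aset t (k - t) := by
      ext q
      constructor
      · rintro ⟨⟨h0, h1, h2⟩, hq1⟩
        have hq1' : 1 ≤ q 1 := by omega
        refine ⟨![q 0, q 1 - 1], ⟨by simpa using h0, by simp; omega, ?_⟩, ?_⟩
        · simp only [Matrix.cons_val_zero, Matrix.cons_val_one, Matrix.head_cons]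
          have : (t:ℤ) * (q 1 - 1) = t * q 1 - t := by ring
          omega
        · funext i; fin_cases i
          · rfl
          · show q 1 - 1 + 1 = q 1; ring
      · rintro ⟨p, ⟨h0, h1, h2⟩, rfl⟩
        refine ⟨⟨by simpa using h0, by simp; omega, ?_⟩, by simp; omega⟩
        simp only [Matrix.cons_val_zero, Matrix.cons_val_one, Matrix.head_cons]
        have : (t:ℤ) * (p 1 + 1) = t * p 1 + t := by ring
        omega
    rw [himg]
    apply Set.ncard_image_of_injective
    intro p q hpq
    have h0 := congrFun hpq 0
    have h1 := congrFun hpq 1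
    simp only [Matrix.cons_val_zero, Matrix.cons_val_one, Matrix.head_cons] at h0 h1
    funext i; fin_cases i
    · exact h0
    · show p 1 = q 1; omega
  rw [hsplit, Set.ncard_union_eq hdisj hBfin hCfin, hBcard, hCcard]
  ring

/-- Counting lattice points in a dilated `t`-triangle. -/
theorem stmt9 (t : ℕ) (ht : 1 ≤ t) (r : ℝ) (hr : 0 < r)
    (F : Set (Fin 2 → ℝ))
    (hFdef : F = convexHull ℝ {![(0:ℝ),0], ![(t:ℝ),0], ![0,1]})
    (Sedge : Fin 3 → Set (Fin 2 → ℝ))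
    (hS0 : Sedge 0 = segment ℝ ![(0:ℝ),0] ![(t:ℝ),0])
    (hS1 : Sedge 1 = segment ℝ ![(t:ℝ),0] ![(0:ℝ),1])
    (hS2 : Sedge 2 = segment ℝ ![(0:ℝ),0] ![(0:ℝ),1])
    (a : Fin 3 → Fin 2 → ℤ) (d : Fin 3 → ℤ) (m : Fin 3 → ℝ)
    (hprim : ∀ j, Int.gcd (a j 0) (a j 1) = 1)
    (hm : ∀ j, -1 < m j ∧ m j ≤ 0)
    (hval : ∀ j, ∀ x ∈ r • Sedge j, affZ (a j) (d j) x = m j)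
    (hmin : ∀ j, ∀ x ∈ r • F, m j ≤ affZ (a j) (d j) x)
    (c : ℤ)
    (hc : ∀ x : Fin 2 → ℝ,
      (t : ℝ) * affZ (a 0) (d 0) x + affZ (a 1) (d 1) x + affZ (a 2) (d 2) x = (c : ℝ)) :
    (r < 1 →
      (max 0 (c + 1) : ℤ) = (Nat.card {p : Fin 2 → ℤ // castPt p ∈ r • F} : ℤ)) ∧
    (1 ≤ r →
      (max 0 (c + 1) : ℤ) = (Nat.card {p : Fin 2 → ℤ // castPt p ∈ r • F} : ℤ) -
        (Nat.card {p : Fin 2 → ℤ // castPt p ∈ (r - 1) • F} : ℤ)) := by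
  have ht' : (0:ℝ) < t := by exact_mod_cast ht
  have hrt : (0:ℝ) < r * t := by positivity
  -- evaluation points
  set z0 : Fin 2 → ℝ := r • ![(0:ℝ),0] with hz0
  set z1 : Fin 2 → ℝ := r • ![(t:ℝ),0] with hz1
  set z2 : Fin 2 → ℝ := r • ![(0:ℝ),1] with hz2
  have ez0 : ∀ j, affZ (a j) (d j) z0 = d j := by
    intro j; simp [affZ, hz0, Pi.smul_apply]
  have ez1 : ∀ j, affZ (a j) (d j) z1 = (a j 0) * (r * t) + d j := by
    intro j; simp [affZ, hz1, Pi.smul_apply]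
  have ez2 : ∀ j, affZ (a j) (d j) z2 = (a j 1) * r + d j := by
    intro j; simp [affZ, hz2, Pi.smul_apply]
  -- memberships
  have hm0 : z0 ∈ r • Sedge 0 := by
    rw [hS0]; exact Set.smul_mem_smul_set (left_mem_segment ℝ _ _)
  have hm2 : z0 ∈ r • Sedge 2 := by
    rw [hS2]; exact Set.smul_mem_smul_set (left_mem_segment ℝ _ _)
  have hm1l : z1 ∈ r • Sedge 1 := by
    rw [hS1]; exact Set.smul_mem_smul_set (left_mem_segment ℝ _ _)
  have hm1r : z2 ∈ r • Sedge 1 := by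
    rw [hS1]; exact Set.smul_mem_smul_set (right_mem_segment ℝ _ _)
  have hz0F : z0 ∈ r • F := by
    rw [hFdef]; exact Set.smul_mem_smul_set (subset_convexHull ℝ _ (by simp))
  -- d 0 = 0 and d 2 = 0
  have hd0 : d 0 = 0 := by
    have h := hval 0 z0 hm0
    rw [ez0] at h
    have h1 := (hm 0).1; have h2 := (hm 0).2
    rw [← h] at h1 h2
    have h1' : (-1:ℤ) < d 0 := by exact_mod_cast h1
    have h2' : d 0 ≤ (0:ℤ) := by exact_mod_cast h2
    omega
  have hd2 : d 2 = 0 := by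
    have h := hval 2 z0 hm2
    rw [ez0] at h
    have h1 := (hm 2).1; have h2 := (hm 2).2
    rw [← h] at h1 h2
    have h1' : (-1:ℤ) < d 2 := by exact_mod_cast h1
    have h2' : d 2 ≤ (0:ℤ) := by exact_mod_cast h2
    omega
  -- d 1 = c
  have hd1 : d 1 = c := by
    have h := hc z0
    rw [ez0, ez0, ez0, hd0, hd2] at h
    have : ((d 1 : ℝ)) = (c:ℝ) := by push_cast at h ⊢; linarith
    exact_mod_cast this
  -- a 1 0 = -1
  have ha11 : a 1 1 = a 1 0 * t := by
    have h1 := hval 1 z1 hm1l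
    have h2 := hval 1 z2 hm1r
    rw [ez1] at h1; rw [ez2] at h2
    have : (a 1 0 : ℝ) * (r * t) = (a 1 1) * r := by linarith
    have h3 : ((a 1 0 * t : ℤ) : ℝ) * r = ((a 1 1 : ℤ) : ℝ) * r := by push_cast; linarith [this]
    have h4 : ((a 1 0 * t : ℤ) : ℝ) = ((a 1 1 : ℤ) : ℝ) :=
      mul_right_cancel₀ (ne_of_gt hr) h3
    exact_mod_cast h4.symm
  have ha10 : a 1 0 = -1 := by
    have hg := hprim 1
    rw [ha11] at hg
    have : Int.gcd (a 1 0 * 1) (a 1 0 * t) = (a 1 0).natAbs * Int.gcd 1 t := Int.gcd_mul_left _ _ _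
    rw [mul_one] at this
    rw [this] at hg
    simp [Int.gcd] at hg
    -- a 1 0 = ± 1; rule out +1 via hmin
    have hnonpos : (a 1 0 : ℝ) * (r * t) ≤ 0 := by
      have h := hmin 1 z0 hz0F
      rw [ez0] at h
      have h2 := hval 1 z1 hm1l
      rw [ez1] at h2
      linarith [h, h2.symm ▸ h]
    rcases Int.natAbs_eq_iff.mp hg with h | h
    · exfalso
      rw [h] at hnonpos
      push_cast at hnonpos
      nlinarith
    · exact_mod_cast h
  -- bounds on c
  have hkey1 : (c : ℝ) ≤ r * t := by
    have h := hval 1 z1 hm1l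
    rw [ez1, ha10, hd1] at h
    have h2 := (hm 1).2
    rw [← h] at h2
    push_cast at h2; linarith
  have hkey2 : r * t < (c : ℝ) + 1 := by
    have h := hval 1 z1 hm1l
    rw [ez1, ha10, hd1] at h
    have h2 := (hm 1).1
    rw [← h] at h2
    push_cast at h2; linarith
  have hc0 : 0 ≤ c := by
    have : (0:ℝ) < (c:ℝ) + 1 := lt_trans hrt hkey2
    have : (-1:ℝ) < c := by linarith
    have : (-1:ℤ) < c := by exact_mod_cast this
    omega
  -- membership characterizations
  have charac : ∀ (s : ℝ) (k : ℤ), 0 ≤ s → (k:ℝ) ≤ s * t → s * t < (k:ℝ) + 1 →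
      {p : Fin 2 → ℤ | castPt p ∈ s • F} = Aset t k := by
    intro s k hs hk1 hk2
    ext p
    rw [Set.mem_setOf_eq, hFdef, smul_mem_char t ht s hs]
    show (0 ≤ (p 0 : ℝ) ∧ 0 ≤ (p 1 : ℝ) ∧ (p 0 : ℝ) + t * p 1 ≤ s * t) ↔ _
    constructor
    · rintro ⟨h0, h1, h2⟩
      refine ⟨by exact_mod_cast h0, by exact_mod_cast h1, ?_⟩
      have : ((p 0 + t * p 1 : ℤ) : ℝ) < ((k + 1 : ℤ) : ℝ) := by push_cast; linarith
      have h3 : (p 0 + (t:ℤ) * p 1) < k + 1 := by exact_mod_cast this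
      omega
    · rintro ⟨h0, h1, h2⟩
      refine ⟨by exact_mod_cast h0, by exact_mod_cast h1, ?_⟩
      have : ((p 0 + t * p 1 : ℤ) : ℝ) ≤ (k : ℝ) := by exact_mod_cast h2
      push_cast at this; linarith
  have hset1 : {p : Fin 2 → ℤ | castPt p ∈ r • F} = Aset t c :=
    charac r c hr.le hkey1 hkey2
  have hcard1 : Nat.card {p : Fin 2 → ℤ // castPt p ∈ r • F} = (Aset t c).ncard := by
    rw [← hset1]; exact Nat.card_coe_set_eq _
  have hmax : (max 0 (c+1) : ℤ) = c + 1 := by omega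
  constructor
  · intro hr1
    have hct : c < t := by
      have : (c:ℝ) < t := lt_of_le_of_lt hkey1 (by nlinarith)
      exact_mod_cast this
    rw [hcard1, hmax, Aset_card t ht c hc0, Aset_empty t (c - t) (by omega)]
    simp only [Set.ncard_empty, zero_add]
    omega
  · intro hr1
    have hs' : (0:ℝ) ≤ r - 1 := by linarith
    have hct : (t:ℤ) ≤ c := by
      have : (t:ℝ) ≤ r * t := by nlinarith
      have h2 : (t:ℝ) < (c:ℝ) + 1 := lt_of_le_of_lt this hkey2
      have : (t:ℤ) < c + 1 := by exact_mod_cast h2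
      omega
    have hset2 : {p : Fin 2 → ℤ | castPt p ∈ (r - 1) • F} = Aset t (c - t) := by
      apply charac (r-1) (c - t) hs'
      · push_cast; nlinarith [hkey1]
      · push_cast; nlinarith [hkey2]
    have hcard2 : Nat.card {p : Fin 2 → ℤ // castPt p ∈ (r-1) • F} = (Aset t (c - t)).ncard := by
      rw [← hset2]; exact Nat.card_coe_set_eq _
    rw [hcard1, hcard2, hmax, Aset_card t ht c hc0]
    push_cast
    omega
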